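/- Conversely, if C : ℝ → ℝ is convex, nonnegative, satisfies lim_{x→+∞} C(x) = 0 and lim_{x→−∞} (C(x)+x) = l for some real l, then there exists a unique integrable probability measure ν on ℝ with mean l whose integrated survival function equals C. -/

import Mathlib

open MeasureTheory Set Filter Topology
open scoped ENNReal

namespace Stmt5Aux

noncomputable def rd (C : ℝ → ℝ) (x : ℝ) : ℝ := sInf (slope C x '' Ioi x)

variable {C : ℝ → ℝ} {l : ℝ}

section Convex
variable (hconv : ConvexOn ℝ univ C)
include hconv

lemma cont : Continuous C := by
  rw [← continuousOn_univ]
  exact hconv.continuousOn isOpen_univ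

lemma secant (x : ℝ) : MonotoneOn (slope C x) (univ \ {x}) := by
  intro a ha b hb hab
  simp only [mem_diff, mem_univ, mem_singleton_iff, true_and] at ha hb
  have := hconv.secant_mono (mem_univ x) (mem_univ a) (mem_univ b) ha hb hab
  simpa [slope_def_field] using this

lemma secant_Ioi (x : ℝ) : MonotoneOn (slope C x) (Ioi x) :=
  (secant hconv x).mono (fun y hy => ⟨trivial, ne_of_gt hy⟩)

lemma adjacent {x y z : ℝ} (hxy : x < y) (hyz : y < z) :
    slope C x y ≤ slope C y z := by
  have := hconv.slope_mono_adjacent (mem_univ x) (mem_univ z) hxy hyz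
  simpa [slope_def_field] using this

section Bot
variable (hbot : Tendsto (fun x => C x + x) atBot (nhds l))
include hbot

/-- `C x + x` is monotone. -/
lemma monoG : Monotone (fun x => C x + x) := by
  set G : ℝ → ℝ := fun x => C x + x with hG
  have hGconv : ConvexOn ℝ univ G := hconv.add (convexOn_id convex_univ)
  intro x y hxy
  by_contra hlt
  push_neg at hlt
  rcases eq_or_lt_of_le hxy with rfl | hxy
  · exact absurd rfl hlt.ne'
  -- slope of G on [x,y] is negative
  set s : ℝ := slope G x y with hs
  have hsneg : s < 0 := by
    rw [hs, slope_def_field]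
    apply div_neg_of_neg_of_pos (by linarith) (by linarith)
  have hw : ∀ w < x, G x + s * (w - x) ≤ G w := by
    intro w hw
    have h1 : (G w - G x) / (w - x) ≤ s := by
      have := hGconv.secant_mono (mem_univ x) (mem_univ w) (mem_univ y)
        hw.ne (ne_of_gt hxy) (by linarith)
      rw [hs, slope_def_field]
      exact this
    have hwx : w - x < 0 := by linarith
    rw [div_le_iff_of_neg hwx] at h1
    linarith
  -- but G tends to l at -infty, while RHS tends to +infty
  have htend : Tendsto (fun w => G x + s * (w - x)) atBot atTop := by
    apply tendsto_atTop_add_const_left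
    exact (tendsto_const_mul_atTop_of_neg hsneg).mpr
      (tendsto_atBot_add_const_right _ _ tendsto_id)
  have h1 : ∀ᶠ w in atBot, G w ≤ l + 1 := by
    filter_upwards [hbot.eventually (eventually_le_nhds (by linarith : l < l + 1))] with w hwl
    exact hwl
  have h2 : ∀ᶠ w in atBot, l + 1 < G x + s * (w - x) := htend.eventually_gt_atTop _
  have h3 : ∀ᶠ w in atBot, w < x := eventually_lt_atBot x
  obtain ⟨w, hw1, hw2, hw3⟩ := (h1.and (h2.and h3)).exists
  have := hw w hw3
  linarith

end Bot

section Top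
variable (htop : Tendsto C atTop (nhds 0))
include htop

/-- `C` is antitone. -/
lemma antiC : Antitone C := by
  intro x y hxy
  by_contra hlt
  push_neg at hlt
  rcases eq_or_lt_of_le hxy with rfl | hxy
  · exact absurd rfl hlt.ne
  set s : ℝ := (C y - C x) / (y - x) with hs
  have hspos : 0 < s := div_pos (by linarith) (by linarith)
  have hw : ∀ z, y < z → C y + s * (z - y) ≤ C z := by
    intro z hz
    have h1 : s ≤ (C z - C y) / (z - y) := by
      have := adjacent hconv hxy hz
      rw [slope_def_field, slope_def_field] at this
      exact this
    rw [le_div_iff₀ (by linarith : (0:ℝ) < z - y)] at h1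
    linarith
  have htend : Tendsto (fun z => C y + s * (z - y)) atTop atTop := by
    apply tendsto_atTop_add_const_left
    exact (tendsto_const_mul_atTop_of_pos hspos).mpr
      (tendsto_atTop_add_const_right _ _ tendsto_id)
  have h1 : ∀ᶠ z in atTop, C z ≤ 1 := by
    filter_upwards [htop.eventually (eventually_le_nhds (by norm_num : (0:ℝ) < 1))] with z hz
    exact hz
  have h2 : ∀ᶠ z in atTop, (1:ℝ) < C y + s * (z - y) := htend.eventually_gt_atTop _
  have h3 : ∀ᶠ z in atTop, y < z := eventually_gt_atTop y
  obtain ⟨z, hz1, hz2, hz3⟩ := (h1.and (h2.and h3)).exists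
  have := hw z hz3
  linarith

lemma slope_nonpos {x y : ℝ} (hxy : x < y) : slope C x y ≤ 0 := by
  rw [slope_def_field]
  apply div_nonpos_of_nonpos_of_nonneg
  · linarith [antiC hconv htop hxy.le]
  · linarith

end Top

section Slopes
variable (hbot : Tendsto (fun x => C x + x) atBot (nhds l))
include hbot

lemma slope_ge_neg_one {x y : ℝ} (hxy : x < y) : -1 ≤ slope C x y := by
  have := monoG hconv hbot hxy.le
  rw [slope_def_field, le_div_iff₀ (by linarith : (0:ℝ) < y - x)]
  simp only at this
  linarith

lemma bddBelow_slopes (x : ℝ) : BddBelow (slope C x '' Ioi x) := by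
  refine ⟨-1, ?_⟩
  rintro z ⟨y, hy, rfl⟩
  exact slope_ge_neg_one hconv hbot hy

lemma rd_le_slope {x y : ℝ} (hxy : x < y) : rd C x ≤ slope C x y :=
  csInf_le (bddBelow_slopes hconv hbot x) ⟨y, hxy, rfl⟩

lemma neg_one_le_rd (x : ℝ) : -1 ≤ rd C x :=
  le_csInf ⟨slope C x (x+1), ⟨x+1, by simp, rfl⟩⟩
    (by rintro z ⟨y, hy, rfl⟩; exact slope_ge_neg_one hconv hbot hy)

lemma hasDerivWithinAt_rd (x : ℝ) : HasDerivWithinAt C (rd C x) (Ioi x) x := by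
  rw [hasDerivWithinAt_iff_tendsto_slope]
  have : Ioi x \ {x} = Ioi x := by
    ext y; simp only [mem_diff, mem_Ioi, mem_singleton_iff, and_iff_left_iff_imp]
    exact fun h => ne_of_gt h
  rw [this]
  exact MonotoneOn.tendsto_nhdsGT (secant_Ioi hconv x) (bddBelow_slopes hconv hbot x)

lemma rd_mono : Monotone (rd C) := by
  intro x y hxy
  rcases eq_or_lt_of_le hxy with rfl | hxy
  · exact le_rfl
  apply le_csInf ((Set.nonempty_Ioi (a := y)).image _)
  rintro b ⟨z, hz, rfl⟩
  calc rd C x ≤ slope C x y := rd_le_slope hconv hbot hxy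
    _ ≤ slope C y z := adjacent hconv hxy hz

lemma rd_right_continuous (x : ℝ) : ContinuousWithinAt (rd C) (Ici x) x := by
  rw [← continuousWithinAt_Ioi_iff_Ici]
  have h1 : Tendsto (rd C) (𝓝[>] x) (𝓝 (sInf (rd C '' Ioi x))) :=
    MonotoneOn.tendsto_nhdsGT ((rd_mono hconv hbot).monotoneOn _)
      ⟨rd C x, by rintro z ⟨y, hy, rfl⟩; exact rd_mono hconv hbot (le_of_lt hy)⟩
  have h2 : sInf (rd C '' Ioi x) = rd C x := by
    apply le_antisymm
    · -- sInf (rd '' Ioi x) ≤ slope C x z for every z > x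
      apply le_csInf ((Set.nonempty_Ioi (a := x)).image _)
      rintro b ⟨z, hz, rfl⟩
      have htend : Tendsto (fun y => slope C y z) (𝓝[>] x) (𝓝 (slope C x z)) := by
        have hca : ContinuousAt (fun y => (C z - C y) / (z - y)) x :=
          ContinuousAt.div ((continuous_const.sub (cont hconv)).continuousAt)
            ((continuous_const.sub continuous_id).continuousAt)
            (by simpa [sub_eq_zero] using (ne_of_gt hz))
        simp only [slope_def_field]
        exact hca.tendsto.mono_left nhdsWithin_le_nhds
      apply ge_of_tendsto htend
      filter_upwards [Ioo_mem_nhdsGT_of_mem (Set.left_mem_Ico.mpr hz)] with y hy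
      calc sInf (rd C '' Ioi x) ≤ rd C y := csInf_le
            ⟨rd C x, by rintro w ⟨u, hu, rfl⟩; exact rd_mono hconv hbot (le_of_lt hu)⟩
            ⟨y, hy.1, rfl⟩
        _ ≤ slope C y z := rd_le_slope hconv hbot hy.2
    · apply le_csInf ((Set.nonempty_Ioi (a := x)).image _)
      rintro b ⟨z, hz, rfl⟩
      exact rd_mono hconv hbot (le_of_lt hz)
  have := h1
  rw [h2] at this
  exact this

lemma ftc {a b : ℝ} (hab : a ≤ b) : ∫ t in a..b, rd C t = C b - C a :=
  intervalIntegral.integral_eq_sub_of_hasDeriv_right_of_le hab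
    ((cont hconv).continuousOn)
    (fun x _ => hasDerivWithinAt_rd hconv hbot x)
    ((rd_mono hconv hbot).intervalIntegrable)

section WithTop
variable (htop : Tendsto C atTop (nhds 0))
include htop

lemma rd_nonpos (x : ℝ) : rd C x ≤ 0 :=
  (rd_le_slope hconv hbot (lt_add_one x)).trans (slope_nonpos hconv htop (lt_add_one x))

lemma slope_le_rd (x : ℝ) : slope C (x-1) x ≤ rd C x := by
  apply le_csInf ((Set.nonempty_Ioi (a := x)).image _)
  rintro b ⟨z, hz, rfl⟩
  exact adjacent hconv (by linarith) hz

lemma rd_tendsto_atTop : Tendsto (rd C) atTop (𝓝 0) := by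
  have hlow : Tendsto (fun x => slope C (x-1) x) atTop (𝓝 0) := by
    have hshift : Tendsto (fun x : ℝ => x - 1) atTop atTop := by
      simpa [sub_eq_add_neg] using tendsto_atTop_add_const_right atTop (-1 : ℝ) tendsto_id
    have h1 : Tendsto (fun x => C x - C (x-1)) atTop (𝓝 (0 - 0)) :=
      htop.sub (htop.comp hshift)
    have h2 : (fun x => slope C (x-1) x) = fun x => C x - C (x-1) := by
      funext x
      rw [slope_def_field]
      have hx : x - (x-1) = 1 := by ring
      rw [hx, div_one]
    rw [h2]
    simpa using h1
  exact tendsto_of_tendsto_of_tendsto_of_le_of_le hlow tendsto_const_nhds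
    (fun x => slope_le_rd hconv hbot htop x) (fun x => rd_nonpos hconv hbot htop x)

end WithTop

lemma rd_tendsto_atBot : Tendsto (rd C) atBot (𝓝 (-1)) := by
  have hup : Tendsto (fun x => slope C x (x+1)) atBot (𝓝 (-1)) := by
    have hshift : Tendsto (fun x : ℝ => x + 1) atBot atBot :=
      tendsto_atBot_add_const_right atBot (1 : ℝ) tendsto_id
    have h1 : Tendsto (fun x => (C (x+1) + (x+1)) - (C x + x)) atBot (𝓝 (l - l)) :=
      (hbot.comp hshift).sub hbot
    have h2 : (fun x => slope C x (x+1)) = fun x => ((C (x+1) + (x+1)) - (C x + x)) - 1 := by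
      funext x
      rw [slope_def_field]
      have hx : x + 1 - x = 1 := by ring
      rw [hx, div_one]
      ring
    rw [h2]
    have : l - l - 1 = -1 := by ring
    exact this ▸ (h1.sub_const 1)
  exact tendsto_of_tendsto_of_tendsto_of_le_of_le tendsto_const_nhds hup
    (fun x => neg_one_le_rd hconv hbot x) (fun x => rd_le_slope hconv hbot (lt_add_one x))

end Slopes
end Convex

/-- The CDF as a Stieltjes function. -/
noncomputable def stF (C : ℝ → ℝ) (l : ℝ) (hconv : ConvexOn ℝ univ C)
    (hbot : Tendsto (fun x => C x + x) atBot (nhds l)) : StieltjesFunction ℝ where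
  toFun := fun x => 1 + rd C x
  mono' := fun x y h => add_le_add_right (rd_mono hconv hbot h) 1
  right_continuous' := fun x =>
    (continuousWithinAt_const).add (rd_right_continuous hconv hbot x)

lemma Ioi_eq_iUnion (a : ℝ) : Ioi a = ⋃ n : ℕ, Ioc a (a + n) := by
  ext x
  simp only [mem_Ioi, mem_iUnion, mem_Ioc]
  constructor
  · intro hx
    obtain ⟨n, hn⟩ := exists_nat_ge (x - a)
    exact ⟨n, hx, by linarith⟩
  · rintro ⟨n, h1, _⟩
    exact h1

section Meas
variable (hconv : ConvexOn ℝ univ C)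
  (htop : Tendsto C atTop (nhds 0)) (hbot : Tendsto (fun x => C x + x) atBot (nhds l))
include hconv htop hbot

@[simp] lemma stF_apply (x : ℝ) : stF C l hconv hbot x = 1 + rd C x := rfl

lemma stF_bot : Tendsto (stF C l hconv hbot) atBot (𝓝 0) := by
  have := (rd_tendsto_atBot hconv hbot).const_add 1
  show Tendsto (fun x => 1 + rd C x) atBot (𝓝 0)
  simpa using this

lemma stF_top : Tendsto (stF C l hconv hbot) atTop (𝓝 1) := by
  have := (rd_tendsto_atTop hconv hbot htop).const_add 1
  show Tendsto (fun x => 1 + rd C x) atTop (𝓝 1)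
  simpa using this

lemma nu_prob : IsProbabilityMeasure (stF C l hconv hbot).measure :=
  StieltjesFunction.isProbabilityMeasure _ (stF_bot hconv htop hbot) (stF_top hconv htop hbot)

lemma nu_Iic (s : ℝ) :
    (stF C l hconv hbot).measure (Iic s) = ENNReal.ofReal (1 + rd C s) := by
  have := StieltjesFunction.measure_Iic (stF C l hconv hbot) (stF_bot hconv htop hbot) s
  simpa [stF_apply hconv htop hbot] using this

lemma nu_Ioi (s : ℝ) :
    (stF C l hconv hbot).measure (Ioi s) = ENNReal.ofReal (- rd C s) := by
  have hprob := nu_prob hconv htop hbot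
  have h1 : (stF C l hconv hbot).measure (Ioi s)
      = (stF C l hconv hbot).measure univ - (stF C l hconv hbot).measure (Iic s) := by
    rw [← Set.compl_Iic, measure_compl measurableSet_Iic (measure_ne_top _ _)]
  rw [h1, measure_univ, nu_Iic hconv htop hbot s]
  rw [(by simp : (1 : ENNReal) = ENNReal.ofReal (1 : ℝ))]
  rw [← ENNReal.ofReal_sub _ (by linarith [neg_one_le_rd hconv hbot s])]
  norm_num

lemma integrableOn_rd {a b : ℝ} (hab : a ≤ b) :
    IntegrableOn (fun t => - rd C t) (Ioc a b) volume := by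
  have h0 : IntervalIntegrable (fun t => rd C t) volume a b :=
    (rd_mono hconv hbot).intervalIntegrable
  have := h0.neg
  rwa [intervalIntegrable_iff_integrableOn_Ioc_of_le hab] at this

lemma lint_Ioc {a b : ℝ} (hab : a ≤ b) :
    ∫⁻ t in Ioc a b, ENNReal.ofReal (- rd C t) = ENNReal.ofReal (C a - C b) := by
  rw [← ofReal_integral_eq_lintegral_ofReal (integrableOn_rd hconv htop hbot hab)
    (ae_of_all _ (fun t => by simp [rd_nonpos hconv hbot htop t]))]
  congr 1
  have : ∫ t in Ioc a b, (- rd C t) = ∫ t in a..b, (- rd C t) :=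
    (intervalIntegral.integral_of_le hab).symm
  rw [this, intervalIntegral.integral_neg, ftc hconv hbot hab]
  ring

lemma lint_Ioi (a : ℝ) :
    ∫⁻ t in Ioi a, ENNReal.ofReal (- rd C t) = ENNReal.ofReal (C a) := by
  rw [Ioi_eq_iUnion a, setLIntegral_iUnion_of_directed]
  · have heq : ∀ n : ℕ, ∫⁻ t in Ioc a (a + n), ENNReal.ofReal (- rd C t)
        = ENNReal.ofReal (C a - C (a + n)) := fun n =>
      lint_Ioc hconv htop hbot (le_add_of_nonneg_right (by positivity : (0:ℝ) ≤ n))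
    simp only [heq]
    apply iSup_eq_of_tendsto
    · intro n m hnm
      apply ENNReal.ofReal_le_ofReal
      have := antiC hconv htop (by exact_mod_cast add_le_add_right (Nat.cast_le.mpr hnm) a :
        a + (n : ℝ) ≤ a + m)
      linarith
    · apply ENNReal.tendsto_ofReal
      have hc : Tendsto (fun n : ℕ => C (a + n)) atTop (𝓝 0) :=
        htop.comp (tendsto_atTop_add_const_left _ a tendsto_natCast_atTop_atTop)
      simpa using tendsto_const_nhds.sub hc
  · intro n m
    exact ⟨max n m, Ioc_subset_Ioc_right (by simp), Ioc_subset_Ioc_right (by simp)⟩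

lemma C_nonneg (x : ℝ) : 0 ≤ C x := by
  apply le_of_tendsto htop
  filter_upwards [eventually_ge_atTop x] with z hz
  exact antiC hconv htop hz

lemma G_ge (x : ℝ) : l ≤ C x + x := by
  apply le_of_tendsto hbot
  filter_upwards [eventually_le_atBot x] with w hw
  exact monoG hconv hbot hw

lemma layercake (x : ℝ) :
    ∫⁻ y, ENNReal.ofReal (max (y - x) 0) ∂(stF C l hconv hbot).measure
      = ENNReal.ofReal (C x) := by
  have hm : Measurable (fun y : ℝ => max (y - x) 0) :=
    (measurable_id.sub measurable_const).max measurable_const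
  rw [lintegral_eq_lintegral_meas_lt (f := fun y : ℝ => max (y - x) 0) _
    (ae_of_all _ fun y => le_max_right (y - x) 0) hm.aemeasurable]
  have h1 : ∫⁻ t in Ioi 0, (stF C l hconv hbot).measure {y | t < max (y - x) 0}
      = ∫⁻ t in Ioi 0, ENNReal.ofReal (- rd C (x + t)) := by
    apply setLIntegral_congr_fun measurableSet_Ioi
    intro t ht
    have hset : {y : ℝ | t < max (y - x) 0} = Ioi (x + t) := by
      ext y
      simp only [mem_setOf_eq, mem_Ioi, lt_max_iff]
      constructor
      · rintro (h | h)
        · linarith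
        · exact absurd ht (by simpa using h.le)
      · intro h
        left; linarith
    dsimp only
    rw [hset, nu_Ioi hconv htop hbot]
  rw [h1]
  have hmp : MeasurePreserving (fun t : ℝ => x + t) volume volume :=
    measurePreserving_add_left volume x
  have hemb : MeasurableEmbedding (fun t : ℝ => x + t) :=
    (MeasurableEquiv.addLeft x).measurableEmbedding
  rw [hmp.setLIntegral_comp_emb hemb (fun s => ENNReal.ofReal (- rd C s)) (Ioi 0)]
  rw [image_const_add_Ioi, add_zero]
  exact lint_Ioi hconv htop hbot x

lemma integrable_max (x : ℝ) :
    Integrable (fun y => max (y - x) 0) (stF C l hconv hbot).measure := by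
  have hm : Measurable (fun y : ℝ => max (y - x) 0) :=
    (measurable_id.sub measurable_const).max measurable_const
  refine ⟨hm.aestronglyMeasurable, ?_⟩
  rw [hasFiniteIntegral_iff_ofReal (f := fun y : ℝ => max (y - x) 0)
    (ae_of_all _ fun y => le_max_right (y - x) 0)]
  rw [layercake hconv htop hbot x]
  exact ENNReal.ofReal_lt_top

lemma integral_max (x : ℝ) :
    ∫ y, max (y - x) 0 ∂(stF C l hconv hbot).measure = C x := by
  have hm : Measurable (fun y : ℝ => max (y - x) 0) :=
    (measurable_id.sub measurable_const).max measurable_const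
  rw [integral_eq_lintegral_of_nonneg_ae (f := fun y : ℝ => max (y - x) 0)
    (ae_of_all _ fun y => le_max_right (y - x) 0) hm.aestronglyMeasurable]
  rw [layercake hconv htop hbot x]
  exact ENNReal.toReal_ofReal (C_nonneg hconv htop hbot x)

lemma survival (x : ℝ) :
    ∫ y in Ici x, (y - x) ∂(stF C l hconv hbot).measure = C x := by
  have h1 : ∫ y in Ici x, max (y - x) 0 ∂(stF C l hconv hbot).measure
      = ∫ y, max (y - x) 0 ∂(stF C l hconv hbot).measure :=
    setIntegral_eq_integral_of_forall_compl_eq_zero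
      (fun y hy => max_eq_right (by simp only [mem_Ici, not_le] at hy; exact sub_nonpos.mpr hy.le))
  have h2 : ∫ y in Ici x, (y - x) ∂(stF C l hconv hbot).measure
      = ∫ y in Ici x, max (y - x) 0 ∂(stF C l hconv hbot).measure := by
    apply setIntegral_congr_fun measurableSet_Ici
    intro y hy
    exact (max_eq_left (sub_nonneg.mpr hy)).symm
  rw [h2, h1, integral_max hconv htop hbot x]

lemma lint_Ioc_pos (n : ℕ) :
    ∫⁻ s in Ioc (-(n:ℝ)) 0, ENNReal.ofReal (1 + rd C s) ≤ ENNReal.ofReal (C 0 - l) := by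
  have hn : (-(n:ℝ)) ≤ 0 := by simp
  have h0 : IntervalIntegrable (fun t => 1 + rd C t) volume (-(n:ℝ)) 0 :=
    (((rd_mono hconv hbot).const_add 1)).intervalIntegrable
  have hint : IntegrableOn (fun t => 1 + rd C t) (Ioc (-(n:ℝ)) 0) volume := by
    rwa [intervalIntegrable_iff_integrableOn_Ioc_of_le hn] at h0
  rw [← ofReal_integral_eq_lintegral_ofReal hint
    (ae_of_all _ fun t => by
      have := neg_one_le_rd hconv hbot t
      show (0:ℝ) ≤ 1 + rd C t
      linarith)]
  apply ENNReal.ofReal_le_ofReal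
  have h1 : ∫ t in Ioc (-(n:ℝ)) 0, (1 + rd C t) = ∫ t in (-(n:ℝ))..0, (1 + rd C t) :=
    (intervalIntegral.integral_of_le hn).symm
  rw [h1, intervalIntegral.integral_add intervalIntegrable_const
    ((rd_mono hconv hbot).intervalIntegrable), intervalIntegral.integral_const,
    ftc hconv hbot hn]
  have := G_ge hconv htop hbot (-(n:ℝ))
  simp only [smul_eq_mul, mul_one, sub_neg_eq_add, zero_add]
  linarith

lemma Iic_eq_iUnion : Iic (0:ℝ) = ⋃ n : ℕ, Ioc (-(n:ℝ)) 0 := by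
  ext x
  simp only [mem_Iic, mem_iUnion, mem_Ioc]
  constructor
  · intro hx
    obtain ⟨n, hn⟩ := exists_nat_gt (-x)
    exact ⟨n, by linarith, hx⟩
  · rintro ⟨n, _, h2⟩
    exact h2

lemma lint_neg_part :
    ∫⁻ y, ENNReal.ofReal (max (-y) 0) ∂(stF C l hconv hbot).measure < ⊤ := by
  have hm : Measurable fun y : ℝ => max (-y) 0 := measurable_neg.max measurable_const
  rw [lintegral_eq_lintegral_meas_lt (f := fun y : ℝ => max (-y) 0) _
    (ae_of_all _ fun y => le_max_right (-y) 0) hm.aemeasurable]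
  have hmono : Monotone fun s => 1 + rd C s := (rd_mono hconv hbot).const_add 1
  have step1 : ∫⁻ t in Ioi 0, (stF C l hconv hbot).measure {y | t < max (-y) 0}
      ≤ ∫⁻ t in Ioi 0, ENNReal.ofReal (1 + rd C (-t)) := by
    apply setLIntegral_mono' measurableSet_Ioi
    intro t ht
    have hset : {y : ℝ | t < max (-y) 0} ⊆ Iic (-t) := by
      intro y hy
      simp only [mem_setOf_eq, lt_max_iff] at hy
      rcases hy with h | h
      · simp only [mem_Iic]; linarith
      · exact absurd ht (by simpa using h.le)
    calc (stF C l hconv hbot).measure {y | t < max (-y) 0}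
        ≤ (stF C l hconv hbot).measure (Iic (-t)) := measure_mono hset
      _ = ENNReal.ofReal (1 + rd C (-t)) := nu_Iic hconv htop hbot (-t)
  have step2 : ∫⁻ t in Ioi 0, ENNReal.ofReal (1 + rd C (-t))
      = ∫⁻ s in Iio 0, ENNReal.ofReal (1 + rd C s) := by
    have hmp : MeasurePreserving (fun t : ℝ => -t) volume volume :=
      Measure.measurePreserving_neg volume
    have hemb : MeasurableEmbedding (fun t : ℝ => -t) :=
      (MeasurableEquiv.neg ℝ).measurableEmbedding
    rw [hmp.setLIntegral_comp_emb hemb (fun s => ENNReal.ofReal (1 + rd C s)) (Ioi 0)]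
    congr 1
    simpa using image_neg_Ioi (a := (0:ℝ))
  have step3 : ∫⁻ s in Iio 0, ENNReal.ofReal (1 + rd C s)
      ≤ ∫⁻ s in Iic 0, ENNReal.ofReal (1 + rd C s) :=
    lintegral_mono' (Measure.restrict_mono Iio_subset_Iic_self le_rfl) le_rfl
  have step4 : ∫⁻ s in Iic 0, ENNReal.ofReal (1 + rd C s) ≤ ENNReal.ofReal (C 0 - l) := by
    rw [Iic_eq_iUnion hconv htop hbot, setLIntegral_iUnion_of_directed]
    · exact iSup_le fun n => lint_Ioc_pos hconv htop hbot n
    · intro n m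
      refine ⟨max n m, Ioc_subset_Ioc_left ?_, Ioc_subset_Ioc_left ?_⟩ <;>
        · simp only [neg_le_neg_iff, Nat.cast_le]
          simp
  calc ∫⁻ t in Ioi 0, (stF C l hconv hbot).measure {y | t < max (-y) 0}
      ≤ ENNReal.ofReal (C 0 - l) := ((step1.trans step2.le).trans step3).trans step4
    _ < ⊤ := ENNReal.ofReal_lt_top

lemma integrable_neg_part :
    Integrable (fun y => max (-y) 0) (stF C l hconv hbot).measure := by
  have hm : Measurable fun y : ℝ => max (-y) 0 := measurable_neg.max measurable_const
  refine ⟨hm.aestronglyMeasurable, ?_⟩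
  rw [hasFiniteIntegral_iff_ofReal (f := fun y : ℝ => max (-y) 0)
    (ae_of_all _ fun y => le_max_right (-y) 0)]
  exact lint_neg_part hconv htop hbot

lemma integrable_id : Integrable (fun y : ℝ => y) (stF C l hconv hbot).measure := by
  have h1 := integrable_max hconv htop hbot 0
  have h2 := (h1.sub (integrable_neg_part hconv htop hbot))
  apply h2.congr
  apply ae_of_all
  intro y
  simp only [Pi.sub_apply, sub_zero]
  rcases le_total 0 y with h | h
  · rw [max_eq_left h, max_eq_right (by linarith)]
    ring
  · rw [max_eq_right h, max_eq_left (by linarith)]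
    ring

end Meas

section Generic
variable {μ : Measure ℝ} [IsProbabilityMeasure μ] (hint : Integrable (fun y : ℝ => y) μ)
include hint

lemma decomp (x : ℝ) :
    ∫ y in Ici x, (y - x) ∂μ
      = (∫ y in Ici x, y ∂μ) + x * (μ (Iio x)).toReal - x := by
  have h1 : ∫ y in Ici x, (y - x) ∂μ
      = (∫ y in Ici x, y ∂μ) - ∫ _ in Ici x, x ∂μ :=
    integral_sub hint.integrableOn (integrableOn_const (measure_ne_top _ _))
  have h2 : ∫ _ in Ici x, x ∂μ = (μ (Ici x)).toReal * x := by
    rw [setIntegral_const, smul_eq_mul, measureReal_def]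
  have h3 : μ (Iio x) + μ (Ici x) = 1 := by
    rw [← measure_union (Iio_disjoint_Ici le_rfl) measurableSet_Ici, Iio_union_Ici,
      measure_univ]
  have h4 : (μ (Iio x)).toReal + (μ (Ici x)).toReal = 1 := by
    rw [← ENNReal.toReal_add (measure_ne_top _ _) (measure_ne_top _ _), h3]
    simp
  have h5 : (μ (Iio x)).toReal = 1 - (μ (Ici x)).toReal := by linarith
  rw [h1, h2, h5]
  ring

lemma tendsto_setIntegral_Ici :
    Tendsto (fun n : ℕ => ∫ y in Ici (-(n:ℝ)), y ∂μ) atTop (𝓝 (∫ y, y ∂μ)) := by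
  have heq : ∀ n : ℕ, ∫ y in Ici (-(n:ℝ)), y ∂μ
      = ∫ y, (Ici (-(n:ℝ))).indicator (fun y => y) y ∂μ :=
    fun n => (integral_indicator measurableSet_Ici).symm
  simp only [heq]
  apply tendsto_integral_of_dominated_convergence (fun y => |y|)
  · intro n
    exact Measurable.aestronglyMeasurable (measurable_id.indicator measurableSet_Ici)
  · exact hint.abs
  · intro n
    apply ae_of_all
    intro y
    calc ‖(Ici (-(n:ℝ))).indicator (fun y => y) y‖
        ≤ ‖y‖ := norm_indicator_le_norm_self _ _
      _ = |y| := rfl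
  · apply ae_of_all
    intro y
    obtain ⟨N, hN⟩ := exists_nat_ge (-y)
    apply Tendsto.congr' _ tendsto_const_nhds
    filter_upwards [eventually_ge_atTop N] with n hn
    have : -(n:ℝ) ≤ y := by
      have : (N:ℝ) ≤ n := Nat.cast_le.mpr hn
      linarith
    exact (indicator_of_mem (mem_Ici.mpr this) (fun y : ℝ => y)).symm

lemma tendsto_tail :
    Tendsto (fun n : ℕ => ∫ y in Iio (-(n:ℝ)), |y| ∂μ) atTop (𝓝 0) := by
  have heq : ∀ n : ℕ, ∫ y in Iio (-(n:ℝ)), |y| ∂μ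
      = ∫ y, (Iio (-(n:ℝ))).indicator (fun y => |y|) y ∂μ :=
    fun n => (integral_indicator measurableSet_Iio).symm
  simp only [heq]
  have h0 : (0:ℝ) = ∫ y, (0:ℝ) ∂μ := by simp
  rw [h0]
  apply tendsto_integral_of_dominated_convergence (fun y => |y|)
  · exact fun n => ((measurable_id.abs).indicator measurableSet_Iio).aestronglyMeasurable
  · exact hint.abs
  · intro n
    apply ae_of_all
    intro y
    calc ‖(Iio (-(n:ℝ))).indicator (fun y => |y|) y‖
        ≤ ‖|y|‖ := norm_indicator_le_norm_self _ _
      _ = |y| := by simp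
  · apply ae_of_all
    intro y
    obtain ⟨N, hN⟩ := exists_nat_ge (-y)
    apply Tendsto.congr' _ tendsto_const_nhds
    filter_upwards [eventually_ge_atTop (N+1)] with n hn
    have hy : ¬ (y < -(n:ℝ)) := by
      have : (N:ℝ) + 1 ≤ n := by exact_mod_cast hn
      push_neg
      linarith
    exact (indicator_of_notMem (by simpa [mem_Iio] using hy) (fun y : ℝ => |y|)).symm

lemma mean_eq_of_survival (hbot : Tendsto (fun x => C x + x) atBot (nhds l))
    (hS : ∀ x, ∫ y in Ici x, (y - x) ∂μ = C x) : ∫ y, y ∂μ = l := by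
  have hnat : Tendsto (fun n : ℕ => -(n:ℝ)) atTop atBot :=
    tendsto_neg_atBot_iff.mpr tendsto_natCast_atTop_atTop
  have key : Tendsto (fun n : ℕ => C (-(n:ℝ)) + (-(n:ℝ))) atTop (𝓝 l) :=
    hbot.comp hnat
  have key2 : ∀ n : ℕ, C (-(n:ℝ)) + (-(n:ℝ))
      = (∫ y in Ici (-(n:ℝ)), y ∂μ) + (-(n:ℝ)) * (μ (Iio (-(n:ℝ)))).toReal := by
    intro n
    rw [← hS (-(n:ℝ)), decomp hint]
    ring
  have hmul : Tendsto (fun n : ℕ => (-(n:ℝ)) * (μ (Iio (-(n:ℝ)))).toReal) atTop (𝓝 0) := by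
    apply squeeze_zero_norm _ (tendsto_tail hint)
    intro n
    have hb : (n:ℝ) * (μ (Iio (-(n:ℝ)))).toReal ≤ ∫ y in Iio (-(n:ℝ)), |y| ∂μ := by
      have : (n:ℝ) * (μ (Iio (-(n:ℝ)))).toReal = ∫ _ in Iio (-(n:ℝ)), (n:ℝ) ∂μ := by
        rw [setIntegral_const, smul_eq_mul, measureReal_def]; ring
      rw [this]
      apply setIntegral_mono_on (integrableOn_const (measure_ne_top _ _))
        (hint.abs.integrableOn) measurableSet_Iio
      intro y hy
      simp only [mem_Iio] at hy
      rw [abs_of_neg (by linarith [Nat.cast_nonneg (α := ℝ) n] : y < 0)]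
      linarith
    have hnn : 0 ≤ ∫ y in Iio (-(n:ℝ)), |y| ∂μ :=
      setIntegral_nonneg measurableSet_Iio (fun y _ => abs_nonneg y)
    calc ‖(-(n:ℝ)) * (μ (Iio (-(n:ℝ)))).toReal‖
        = (n:ℝ) * (μ (Iio (-(n:ℝ)))).toReal := by
          rw [norm_mul]
          simp [abs_of_nonneg ENNReal.toReal_nonneg]
      _ ≤ ∫ y in Iio (-(n:ℝ)), |y| ∂μ := hb
  have key3 : Tendsto (fun n : ℕ => C (-(n:ℝ)) + (-(n:ℝ))) atTop
      (𝓝 ((∫ y, y ∂μ) + 0)) := by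
    simp only [key2]
    exact (tendsto_setIntegral_Ici hint).add hmul
  have := tendsto_nhds_unique key3 key
  simpa using this

lemma survival_bounds (hS : ∀ x, ∫ y in Ici x, (y - x) ∂μ = C x) {x h : ℝ} (hh : 0 < h) :
    h * (μ (Ici x)).toReal ≤ C (x - h) - C x ∧
      C (x - h) - C x ≤ h * (μ (Ici (x - h))).toReal := by
  have hIab : IntegrableOn (fun y => y - (x - h)) (Ico (x-h) x) μ :=
    (hint.sub (integrable_const _)).integrableOn
  have hIb : IntegrableOn (fun y => y - (x - h)) (Ici x) μ :=
    (hint.sub (integrable_const _)).integrableOn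
  have hIb' : IntegrableOn (fun y => y - x) (Ici x) μ :=
    (hint.sub (integrable_const _)).integrableOn
  have hsplit : Ici (x - h) = Ico (x-h) x ∪ Ici x := by
    rw [Ico_union_Ici_eq_Ici (by linarith)]
  have hdisj : Disjoint (Ico (x-h) x) (Ici x) := by
    apply disjoint_left.mpr
    intro y hy hy2
    simp only [mem_Ico] at hy
    simp only [mem_Ici] at hy2
    linarith [hy.2]
  have heq1 : ∫ y in Ici (x-h), (y - (x-h)) ∂μ
      = (∫ y in Ico (x-h) x, (y - (x-h)) ∂μ) + ∫ y in Ici x, (y - (x-h)) ∂μ := by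
    rw [hsplit]
    exact setIntegral_union hdisj measurableSet_Ici hIab hIb
  have heq2 : ∫ y in Ici x, (y - (x-h)) ∂μ
      = (∫ y in Ici x, (y - x) ∂μ) + (μ (Ici x)).toReal * h := by
    have hfe : (fun y : ℝ => y - (x - h)) = fun y => (y - x) + h := by
      funext y; ring
    rw [hfe, integral_add hIb' (integrableOn_const (measure_ne_top _ _)),
      setIntegral_const, smul_eq_mul, measureReal_def]
  have hico_nonneg : 0 ≤ ∫ y in Ico (x-h) x, (y - (x-h)) ∂μ := by
    apply setIntegral_nonneg measurableSet_Ico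
    intro y hy
    simp only [mem_Ico] at hy
    linarith [hy.1]
  have hico_le : ∫ y in Ico (x-h) x, (y - (x-h)) ∂μ ≤ (μ (Ico (x-h) x)).toReal * h := by
    have : (μ (Ico (x-h) x)).toReal * h = ∫ _ in Ico (x-h) x, h ∂μ := by
      rw [setIntegral_const, smul_eq_mul, measureReal_def]
    rw [this]
    apply setIntegral_mono_on hIab (integrableOn_const (measure_ne_top _ _))
      measurableSet_Ico
    intro y hy
    simp only [mem_Ico] at hy
    linarith [hy.2]
  have hmadd : (μ (Ico (x-h) x)).toReal + (μ (Ici x)).toReal = (μ (Ici (x-h))).toReal := by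
    rw [hsplit, measure_union hdisj measurableSet_Ici,
      ENNReal.toReal_add (measure_ne_top _ _) (measure_ne_top _ _)]
  have hCa := hS (x - h)
  have hCb := hS x
  rw [heq1, heq2, hCb] at hCa
  constructor
  · nlinarith
  · nlinarith

lemma Ici_toReal_le {μ₂ : Measure ℝ} [IsProbabilityMeasure μ₂]
    (hint₂ : Integrable (fun y : ℝ => y) μ₂)
    (hS : ∀ x, ∫ y in Ici x, (y - x) ∂μ = C x)
    (hS₂ : ∀ x, ∫ y in Ici x, (y - x) ∂μ₂ = C x) (x : ℝ) :
    (μ (Ici x)).toReal ≤ (μ₂ (Ici x)).toReal := by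
  have hb : ∀ n : ℕ, (μ (Ici x)).toReal ≤ (μ₂ (Ici (x - 1/(n+1)))).toReal := by
    intro n
    have hh : (0:ℝ) < 1/(n+1) := by positivity
    have h1 := (survival_bounds hint hS (x := x) hh).1
    have h2 := (survival_bounds hint₂ hS₂ (x := x) hh).2
    have := h1.trans h2
    exact le_of_mul_le_mul_left (by linarith) hh
  have hiInter : (⋂ n : ℕ, Ici (x - 1/(n+1))) = Ici x := by
    ext y
    simp only [mem_iInter, mem_Ici]
    constructor
    · intro hy
      by_contra hxy
      push_neg at hxy
      obtain ⟨n, hn⟩ := exists_nat_one_div_lt (by linarith : (0:ℝ) < x - y)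
      have := hy n
      have : 1/((n:ℝ)+1) < x - y := by exact_mod_cast hn
      linarith [hy n]
    · intro hy n
      have : (0:ℝ) < 1/((n:ℝ)+1) := by positivity
      linarith
  have htend : Tendsto (fun n : ℕ => (μ₂ (Ici (x - 1/(n+1)))).toReal) atTop
      (𝓝 ((μ₂ (Ici x)).toReal)) := by
    have h1 : Tendsto (fun n : ℕ => μ₂ (Ici (x - 1/(n+1)))) atTop (𝓝 (μ₂ (Ici x))) := by
      have := tendsto_measure_iInter_atTop (μ := μ₂)
        (s := fun n : ℕ => Ici (x - 1/(n+1)))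
        (fun n => measurableSet_Ici.nullMeasurableSet)
        (fun n m hnm => Ici_subset_Ici.mpr (by
          have h1 : (n:ℝ) + 1 ≤ (m:ℝ) + 1 := by exact_mod_cast Nat.succ_le_succ hnm
          have h2 : 1/((m:ℝ)+1) ≤ 1/((n:ℝ)+1) :=
            one_div_le_one_div_of_le (by positivity) h1
          linarith))
        ⟨0, measure_ne_top _ _⟩
      rwa [hiInter] at this
    exact (ENNReal.tendsto_toReal (measure_ne_top _ _)).comp h1
  exact ge_of_tendsto htend (Eventually.of_forall hb)

end Generic

lemma uniqueness {μ₁ μ₂ : Measure ℝ} [IsProbabilityMeasure μ₁] [IsProbabilityMeasure μ₂]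
    (hint₁ : Integrable (fun y : ℝ => y) μ₁) (hint₂ : Integrable (fun y : ℝ => y) μ₂)
    (hS₁ : ∀ x, ∫ y in Ici x, (y - x) ∂μ₁ = C x)
    (hS₂ : ∀ x, ∫ y in Ici x, (y - x) ∂μ₂ = C x) : μ₁ = μ₂ := by
  apply Measure.ext_of_Ici
  intro x
  have h1 := Ici_toReal_le hint₁ hint₂ hS₁ hS₂ x
  have h2 := Ici_toReal_le hint₂ hint₁ hS₂ hS₁ x
  exact (ENNReal.toReal_eq_toReal_iff' (measure_ne_top _ _) (measure_ne_top _ _)).mp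
    (le_antisymm h1 h2)

end Stmt5Aux


open MeasureTheory Set Filter

noncomputable def meanM (μ : Measure ℝ) : ℝ := ∫ y, y ∂μ

noncomputable def rSupE (μ : Measure ℝ) : EReal :=
  sInf ((fun z : ℝ => (z : EReal)) '' {z : ℝ | μ (Ici z) = 0})

noncomputable def psiWds (μ : Measure ℝ) (x : ℝ) : EReal :=
  if (x : EReal) < rSupE μ then
    ((((∫ y in Ici x, y ∂μ) - meanM μ) / (μ (Ici x)).toReal : ℝ) : EReal)
  else ⊤

noncomputable def Kfun (μ : Measure ℝ) (x : ℝ) : ℝ :=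
  (∫ y in Ici x, (y - x) ∂μ) - meanM μ

theorem stmt5 (C : ℝ → ℝ) (l : ℝ)
    (hconv : ConvexOn ℝ univ C)
    (hnonneg : ∀ x, 0 ≤ C x)
    (htop : Tendsto C atTop (nhds 0))
    (hbot : Tendsto (fun x => C x + x) atBot (nhds l)) :
    ∃! ν : Measure ℝ, IsProbabilityMeasure ν ∧ Integrable (fun y : ℝ => y) ν ∧
      (∫ y, y ∂ν) = l ∧ ∀ x, (∫ y in Ici x, (y - x) ∂ν) = C x := by
  refine ⟨(Stmt5Aux.stF C l hconv hbot).measure,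
    ⟨Stmt5Aux.nu_prob hconv htop hbot, Stmt5Aux.integrable_id hconv htop hbot, ?_,
      fun x => Stmt5Aux.survival hconv htop hbot x⟩, ?_⟩
  · haveI := Stmt5Aux.nu_prob hconv htop hbot
    exact Stmt5Aux.mean_eq_of_survival (Stmt5Aux.integrable_id hconv htop hbot) hbot
      (fun x => Stmt5Aux.survival hconv htop hbot x)
  · rintro ν ⟨hp, hi, _, hs⟩
    haveI := hp
    haveI := Stmt5Aux.nu_prob hconv htop hbot
    exact Stmt5Aux.uniqueness hi (Stmt5Aux.integrable_id hconv htop hbot) hs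
      (fun x => Stmt5Aux.survival hconv htop hbot x)
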